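/- arXiv:1410.2182 — 5 statements merged into one kernel-verified Lean document; each statement's English description precedes it below -/
import Mathlib

section
/- For an odd prime p and integers r > s > 0, and any integer u coprime to p, the Euler quotients satisfy Q_r(u) ≡ Q_s(u) (mod p^s), where Q_t(u) is the unique residue modulo p^t with Q_t(u) ≡ (u^φ(p^t) − 1)/p^t (mod p^t). -/
/-- The Euler quotient `Q_t(u)`: the unique residue modulo `p^t` congruent to
`(u^{φ(p^t)} - 1)/p^t`, with value `0` when `gcd(u,p) > 1`. -/
def eulerQuotient (p t u : ℕ) : ℕ :=
  if Nat.Coprime u p then (u ^ (p ^ t).totient - 1) / p ^ t % p ^ t else 0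

private lemma sq_dvd_pow_sub (x : ℤ) : ∀ i : ℕ, (x - 1) ^ 2 ∣ x ^ i - 1 - i * (x - 1)
  | 0 => by simp
  | (i + 1) => by
    have ih := sq_dvd_pow_sub x i
    have h : x ^ (i + 1) - 1 - (i + 1 : ℕ) * (x - 1)
        = x * (x ^ i - 1 - i * (x - 1)) + i * (x - 1) ^ 2 := by
      push_cast; ring
    rw [h]
    exact dvd_add (ih.mul_left x) (dvd_mul_left _ _)

private lemma sum_geom_dvd (p : ℕ) (hp : p.Prime) (hodd : Odd p) (n : ℕ) (hn : 1 ≤ n)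
    (x : ℤ) (hx : (p : ℤ) ^ n ∣ x - 1) :
    (p : ℤ) ^ (n + 1) ∣ (∑ i ∈ Finset.range p, x ^ i) - p := by
  have hsum : (∑ i ∈ Finset.range p, x ^ i) - p
      = (∑ i ∈ Finset.range p, (x ^ i - 1 - i * (x - 1)))
        + (∑ i ∈ Finset.range p, (i : ℤ)) * (x - 1) := by
    rw [Finset.sum_mul, ← Finset.sum_add_distrib]
    rw [show ((p : ℤ)) = ∑ _i ∈ Finset.range p, (1 : ℤ) by simp]
    rw [← Finset.sum_sub_distrib]
    exact Finset.sum_congr rfl fun i _ => by ring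
  rw [hsum]
  refine dvd_add (Finset.dvd_sum fun i _ => ?_) ?_
  · have h1 : (p : ℤ) ^ (n + 1) ∣ (x - 1) ^ 2 := by
      calc (p : ℤ) ^ (n + 1) ∣ ((p : ℤ) ^ n) ^ 2 := by
            rw [← pow_mul]; exact pow_dvd_pow _ (by omega)
        _ ∣ (x - 1) ^ 2 := pow_dvd_pow_of_dvd hx 2
    exact h1.trans (sq_dvd_pow_sub x i)
  · have hpT : (p : ℤ) ∣ ∑ i ∈ Finset.range p, (i : ℤ) := by
      have h2 : (∑ i ∈ Finset.range p, i) * 2 = p * (p - 1) := Finset.sum_range_id_mul_two p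
      have hdvd : p ∣ (∑ i ∈ Finset.range p, i) * 2 := h2 ▸ Dvd.intro _ rfl
      have hc2 : Nat.Coprime p 2 := (Nat.Prime.coprime_iff_not_dvd hp).mpr (by
        intro h
        have h2 : p = 2 := (Nat.prime_dvd_prime_iff_eq hp Nat.prime_two).mp h
        rw [Nat.odd_iff] at hodd; omega)
      have : p ∣ ∑ i ∈ Finset.range p, i := Nat.Coprime.dvd_of_dvd_mul_right hc2 hdvd
      exact_mod_cast Int.natCast_dvd_natCast.mpr this |>.trans (by push_cast; simp)
    rw [pow_succ, mul_comm ((p:ℤ)^n) (p:ℤ)]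
    exact mul_dvd_mul hpT hx

private lemma step_dvd (p : ℕ) (hp : p.Prime) (hodd : Odd p) (n : ℕ) (hn : 1 ≤ n)
    (x : ℤ) (hx : (p : ℤ) ^ n ∣ x - 1) :
    (p : ℤ) ^ (2 * n + 1) ∣ x ^ p - 1 - p * (x - 1) := by
  have hg : x ^ p - 1 - p * (x - 1) = (x - 1) * ((∑ i ∈ Finset.range p, x ^ i) - p) := by
    have h := geom_sum_mul x p
    linear_combination -h
  rw [hg, show 2 * n + 1 = n + (n + 1) by omega, pow_add]
  exact mul_dvd_mul hx (sum_geom_dvd p hp hodd n hn x hx)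

private lemma main_claim (p : ℕ) (hp : p.Prime) (hodd : Odd p) (s : ℕ) (hs : 1 ≤ s)
    (x : ℤ) (hx : (p : ℤ) ^ s ∣ x - 1) :
    ∀ k : ℕ, (p : ℤ) ^ (2 * s + k) ∣ x ^ (p ^ k) - 1 - p ^ k * (x - 1)
  | 0 => by
    have h : x ^ (p ^ 0) - 1 - (p : ℤ) ^ 0 * (x - 1) = 0 := by simp
    rw [h]; exact dvd_zero _
  | (k + 1) => by
    have ih := main_claim p hp hodd s hs x hx k
    have hy1 : (p : ℤ) ^ (s + k) ∣ x ^ (p ^ k) - 1 := by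
      have h1 : (p : ℤ) ^ (s + k) ∣ x ^ (p ^ k) - 1 - p ^ k * (x - 1) :=
        dvd_trans (pow_dvd_pow _ (by omega)) ih
      have h2 : (p : ℤ) ^ (s + k) ∣ (p : ℤ) ^ k * (x - 1) := by
        rw [show s + k = k + s by omega, pow_add]
        exact mul_dvd_mul dvd_rfl hx
      simpa using dvd_add h1 h2
    have hstep := step_dvd p hp hodd (s + k) (by omega) (x ^ (p ^ k)) hy1
    have h3 : (p : ℤ) ^ (2 * s + (k + 1)) ∣ (x ^ (p ^ k)) ^ p - 1 - p * (x ^ (p ^ k) - 1) :=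
      dvd_trans (pow_dvd_pow _ (by omega)) hstep
    have h4 : (p : ℤ) ^ (2 * s + (k + 1)) ∣ (p : ℤ) * (x ^ (p ^ k) - 1 - p ^ k * (x - 1)) := by
      rw [show 2 * s + (k + 1) = 1 + (2 * s + k) by omega, pow_add, pow_one]
      exact mul_dvd_mul_left _ ih
    have hcomb := dvd_add h3 h4
    have heq : (x ^ (p ^ k)) ^ p - 1 - p * (x ^ (p ^ k) - 1)
        + (p : ℤ) * (x ^ (p ^ k) - 1 - p ^ k * (x - 1))
        = x ^ (p ^ (k + 1)) - 1 - p ^ (k + 1) * (x - 1) := by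
      rw [← pow_mul, ← pow_succ]
      ring
    rwa [heq] at hcomb

theorem eulerQuotient_modEq (p r s u : ℕ) (hp : p.Prime) (hodd : Odd p)
    (hs : 0 < s) (hrs : s < r) (hu : Nat.Coprime u p) :
    eulerQuotient p r u ≡ eulerQuotient p s u [MOD p ^ s] := by
  have hu0 : 0 < u := Nat.pos_of_ne_zero fun h => by
    subst h
    have h1 : p = 1 := by simpa [Nat.Coprime] using hu
    exact hp.one_lt.ne' h1
  unfold eulerQuotient
  rw [if_pos hu, if_pos hu]
  set k := r - s with hk
  have hr : r = s + k := by omega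
  have hk1 : 1 ≤ k := by omega
  have hφ : (p ^ r).totient = (p ^ s).totient * p ^ k := by
    rw [hr, Nat.totient_prime_pow hp (by omega), Nat.totient_prime_pow hp hs]
    rw [show s + k - 1 = (s - 1) + k by omega, pow_add]
    ring
  have hdr : p ^ r ∣ u ^ (p ^ r).totient - 1 := by
    have h := Nat.ModEq.pow_totient (Nat.Coprime.pow_right r hu)
    exact (Nat.modEq_iff_dvd' (Nat.one_le_pow _ _ hu0)).mp h.symm
  have hds : p ^ s ∣ u ^ (p ^ s).totient - 1 := by
    have h := Nat.ModEq.pow_totient (Nat.Coprime.pow_right s hu)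
    exact (Nat.modEq_iff_dvd' (Nat.one_le_pow _ _ hu0)).mp h.symm
  have key : (u ^ (p ^ r).totient - 1) / p ^ r ≡ (u ^ (p ^ s).totient - 1) / p ^ s [MOD p ^ s] := by
    rw [Nat.modEq_iff_dvd]
    set A := (u ^ (p ^ r).totient - 1) / p ^ r with hA
    set B := (u ^ (p ^ s).totient - 1) / p ^ s with hB
    have hAe : (A : ℤ) * p ^ r = (u : ℤ) ^ (p ^ r).totient - 1 := by
      have h1 : ((A * p ^ r : ℕ) : ℤ) = ((u ^ (p ^ r).totient - 1 : ℕ) : ℤ) :=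
        congrArg _ (Nat.div_mul_cancel hdr)
      rwa [Nat.cast_mul, Nat.cast_sub (Nat.one_le_pow _ _ hu0), Nat.cast_pow,
        Nat.cast_pow, Nat.cast_one] at h1
    have hBe : (B : ℤ) * p ^ s = (u : ℤ) ^ (p ^ s).totient - 1 := by
      have h1 : ((B * p ^ s : ℕ) : ℤ) = ((u ^ (p ^ s).totient - 1 : ℕ) : ℤ) :=
        congrArg _ (Nat.div_mul_cancel hds)
      rwa [Nat.cast_mul, Nat.cast_sub (Nat.one_le_pow _ _ hu0), Nat.cast_pow,
        Nat.cast_pow, Nat.cast_one] at h1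
    -- set x = u ^ totient (p^s) over ℤ
    set x : ℤ := (u : ℤ) ^ (p ^ s).totient with hx
    have hxd : (p : ℤ) ^ s ∣ x - 1 := by
      rw [← hBe]; exact dvd_mul_left _ _
    have hmc := main_claim p hp hodd s hs x hxd k
    have hXr : (u : ℤ) ^ (p ^ r).totient = x ^ (p ^ k) := by
      rw [hφ, pow_mul]
    -- p^(2s+k) ∣ x^(p^k) - 1 - p^k * (x - 1)
    have hne : ((p : ℤ) ^ r) ≠ 0 := by
      have := hp.pos; positivity
    push_cast
    have hmul : ((p : ℤ) ^ s) * ((p:ℤ) ^ r) ∣ ((B : ℤ) - A) * ((p:ℤ) ^ r) := by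
      have heq : ((B : ℤ) - A) * ((p:ℤ) ^ r)
          = -(x ^ (p ^ k) - 1 - (p:ℤ) ^ k * (x - 1)) := by
        have hBr : (B : ℤ) * (p:ℤ) ^ r = (p:ℤ) ^ k * (x - 1) := by
          rw [hr, pow_add, show (p:ℤ)^s * (p:ℤ)^k = (p:ℤ)^k * (p:ℤ)^s by ring,
            ← mul_assoc, mul_comm (B:ℤ) ((p:ℤ)^k), mul_assoc, hBe]
        rw [sub_mul, hAe, hXr, hBr]
        ring
      rw [heq]
      have : ((p : ℤ) ^ s) * ((p:ℤ) ^ r) = (p:ℤ) ^ (2 * s + k) := by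
        rw [← pow_add]; congr 1; omega
      rw [this]
      exact hmc.neg_right
    exact (mul_dvd_mul_iff_right hne).mp hmul
  calc (u ^ (p ^ r).totient - 1) / p ^ r % p ^ r
      ≡ (u ^ (p ^ r).totient - 1) / p ^ r [MOD p ^ s] :=
        (Nat.ModEq.of_dvd (pow_dvd_pow p hrs.le) (Nat.mod_modEq _ _))
    _ ≡ (u ^ (p ^ s).totient - 1) / p ^ s [MOD p ^ s] := key
    _ ≡ (u ^ (p ^ s).totient - 1) / p ^ s % p ^ s [MOD p ^ s] := (Nat.mod_modEq _ _).symm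
end

section
/- Let p be an odd prime and r ≥ 1. Define H_{r−1}(u) for u coprime to p by H_{r−1}(u) ≡ (Q_r(u) − Q_{r−1}(u))/p^{r−1} (mod p) with 0 ≤ H_{r−1}(u) < p (where Q_0 = 0, so H_0 = Q_1 is the Fermat quotient), and H_{r−1}(u) = 0 if p | u. Then for all integers v coprime to p and all integers k, H_{r−1}(v + k p^r) ≡ H_{r−1}(v) − k v^{p−2} (mod p). -/
open Classical in
/-- The Euler quotient `Q_t(u)` (integer version), zero when `u` is not coprime to `p`. -/
noncomputable def eulerQuotientZ (p t : ℕ) (u : ℤ) : ℤ :=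
  if IsCoprime u (p : ℤ) then (u ^ (p ^ t).totient - 1) / (p : ℤ) ^ t % (p : ℤ) ^ t else 0

/-- The highest-level quotient `H_{r-1}(u) ≡ (Q_r(u) - Q_{r-1}(u))/p^{r-1} (mod p)`,
with `0 ≤ H_{r-1}(u) < p`; zero when `p ∣ u`.  (Note `Q_0 = 0`, so `H_0 = Q_1`.) -/
noncomputable def levelQuotientZ (p r : ℕ) (u : ℤ) : ℤ :=
  (eulerQuotientZ p r u - eulerQuotientZ p (r - 1) u) / (p : ℤ) ^ (r - 1) % (p : ℤ)

/-- Binomial congruence: `(a+b)^(n+1) ≡ a^(n+1) + (n+1) a^n b  (mod b²)`. -/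
private lemma binom_aux (a b : ℤ) : ∀ n : ℕ,
    b ^ 2 ∣ (a + b) ^ (n + 1) - (a ^ (n + 1) + (n + 1) * a ^ n * b)
  | 0 => by norm_num
  | n + 1 => by
    obtain ⟨c, hc⟩ := binom_aux a b n
    refine ⟨c * (a + b) + (n + 1) * a ^ n, ?_⟩
    push_cast
    linear_combination (a + b) * hc

/-- Euler's theorem for integers modulo `p^t`. -/
private lemma euler_dvd (p t : ℕ) (hp : p.Prime) {u : ℤ} (hu : IsCoprime u (p : ℤ)) :
    (p : ℤ) ^ t ∣ u ^ (p ^ t).totient - 1 := by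
  have hg : Int.gcd u (p : ℤ) = 1 := Int.isCoprime_iff_gcd_eq_one.mp hu
  have hcop : Nat.Coprime u.natAbs (p ^ t) := by
    apply Nat.Coprime.pow_right
    simpa [Int.gcd] using hg
  have hunit : IsUnit ((u : ZMod (p ^ t))) := by
    rcases Int.natAbs_eq u with h | h
    · rw [h, Int.cast_natCast]; exact (ZMod.isUnit_iff_coprime _ _).mpr hcop
    · rw [h, Int.cast_neg, Int.cast_natCast]
      exact ((ZMod.isUnit_iff_coprime _ _).mpr hcop).neg
  obtain ⟨x, hx⟩ := hunit
  have hpow : ((u : ZMod (p ^ t))) ^ (p ^ t).totient = 1 := by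
    rw [← hx, ← Units.val_pow_eq_pow_val, ZMod.pow_totient, Units.val_one]
  have h0 : ((u ^ (p ^ t).totient - 1 : ℤ) : ZMod (p ^ t)) = 0 := by
    push_cast [hpow]; ring
  have := (ZMod.intCast_zmod_eq_zero_iff_dvd _ _).mp h0
  exact_mod_cast this

private lemma eulerQuotientZ_eq (p t : ℕ) (hp : 0 < p) {u c : ℤ} (hu : IsCoprime u (p : ℤ))
    (hc : u ^ (p ^ t).totient - 1 = (p : ℤ) ^ t * c) :
    eulerQuotientZ p t u = c % (p : ℤ) ^ t := by
  have hne : ((p : ℤ)) ^ t ≠ 0 := by positivity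
  rw [eulerQuotientZ, if_pos hu, hc, Int.mul_ediv_cancel_left _ hne]

theorem levelQuotientZ_shift (p r : ℕ) (hp : p.Prime) (hodd : Odd p) (hr : 1 ≤ r)
    (v : ℤ) (hv : IsCoprime v (p : ℤ)) (k : ℤ) :
    levelQuotientZ p r (v + k * (p : ℤ) ^ r) ≡
      levelQuotientZ p r v - k * v ^ (p - 2) [ZMOD (p : ℕ)] := by
  obtain ⟨s, rfl⟩ : ∃ s, r = s + 1 := ⟨r - 1, (Nat.succ_pred_eq_of_pos hr).symm⟩
  have hp0 : (0 : ℤ) < (p : ℤ) := by exact_mod_cast hp.pos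
  have hPs : (0 : ℤ) < (p : ℤ) ^ s := pow_pos hp0 s
  have hPr : (0 : ℤ) < (p : ℤ) ^ (s + 1) := pow_pos hp0 _
  set P : ℤ := (p : ℤ) with hPdef
  set w : ℤ := v + k * P ^ (s + 1) with hwdef
  have hw : IsCoprime w P := by
    have h := IsCoprime.add_mul_left_left hv (k * P ^ s)
    have : v + P * (k * P ^ s) = w := by rw [hwdef]; ring
    rwa [this] at h
  -- totients
  set n : ℕ := (p ^ (s + 1)).totient with hn
  set m : ℕ := (p ^ s).totient with hm
  have hnval : n = p ^ s * (p - 1) := Nat.totient_prime_pow_succ hp s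
  have hn1 : 1 ≤ n := Nat.totient_pos.mpr (pow_pos hp.pos _)
  have hm1 : 1 ≤ m := Nat.totient_pos.mpr (pow_pos hp.pos _)
  obtain ⟨n', hn'⟩ : ∃ n', n = n' + 1 := ⟨n - 1, (Nat.succ_pred_eq_of_pos hn1).symm⟩
  obtain ⟨m', hm'⟩ : ∃ m', m = m' + 1 := ⟨m - 1, (Nat.succ_pred_eq_of_pos hm1).symm⟩
  -- exact Euler quotients
  obtain ⟨qv, hqv⟩ := euler_dvd p (s + 1) hp hv
  obtain ⟨qw, hqw⟩ := euler_dvd p (s + 1) hp hw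
  obtain ⟨av, hav⟩ := euler_dvd p s hp hv
  obtain ⟨aw, haw⟩ := euler_dvd p s hp hw
  -- Step A : the level-(s) Euler quotients agree
  have hQs : eulerQuotientZ p s w = eulerQuotientZ p s v := by
    have hdvd : P ^ s ∣ aw - av := by
      rcases Nat.eq_zero_or_pos s with hs | hs
      · rw [hs]; simpa using one_dvd _
      · obtain ⟨s', rfl⟩ : ∃ s', s = s' + 1 := ⟨s - 1, (Nat.succ_pred_eq_of_pos hs).symm⟩
        have hmval : m = p ^ s' * (p - 1) := Nat.totient_prime_pow_succ hp s'
        obtain ⟨c, hc⟩ := binom_aux v (k * P ^ (s' + 1 + 1)) m'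
        -- express m as an integer
        have hmc : (m : ℤ) = P ^ s' * (P - 1) := by
          rw [hmval]; push_cast [Nat.cast_sub hp.one_le]; ring
        have hkey : P ^ (s' + 1) * (aw - av)
            = P ^ (s' + 1) * (P ^ (s' + 1) * ((P - 1) * v ^ m' * k + k ^ 2 * P ^ 2 * c)) := by
          have h1 : P ^ (s' + 1) * (aw - av) = w ^ m - v ^ m := by
            rw [mul_sub, ← haw, ← hav]; ring
          rw [h1, hm']
          have h2 : w ^ (m' + 1) = v ^ (m' + 1) + ((m' : ℤ) + 1) * v ^ m' * (k * P ^ (s' + 1 + 1))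
              + (k * P ^ (s' + 1 + 1)) ^ 2 * c := by
            rw [hwdef]; push_cast at hc ⊢; linarith [hc]
          have h3 : ((m' : ℤ) + 1) = P ^ s' * (P - 1) := by
            rw [← hmc, hm']; push_cast; ring
          rw [h2, h3]; ring
        exact ⟨_, mul_left_cancel₀ (pow_pos hp0 (s' + 1)).ne' hkey⟩
      
    rw [eulerQuotientZ_eq p s hp.pos hw haw, eulerQuotientZ_eq p s hp.pos hv hav]
    exact Int.ModEq.symm (Int.modEq_iff_dvd.mpr hdvd)
  -- Step B : the level-(s+1) quotients differ by `P^s * E`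
  obtain ⟨c2, hc2⟩ := binom_aux v (k * P ^ (s + 1)) n'
  have hnc : ((n' : ℤ) + 1) = P ^ s * (P - 1) := by
    have : (n : ℤ) = P ^ s * (P - 1) := by
      rw [hnval]; push_cast [Nat.cast_sub hp.one_le]; ring
    rw [← this, hn']; push_cast; ring
  have hqdiff : qw - qv = P ^ s * ((P - 1) * v ^ n' * k + k ^ 2 * P * c2) := by
    have h1 : P ^ (s + 1) * (qw - qv) = w ^ n - v ^ n := by
      rw [mul_sub, ← hqw, ← hqv]; ring
    have h2 : w ^ (n' + 1) = v ^ (n' + 1) + ((n' : ℤ) + 1) * v ^ n' * (k * P ^ (s + 1))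
        + (k * P ^ (s + 1)) ^ 2 * c2 := by
      rw [hwdef]; push_cast at hc2 ⊢; linarith [hc2]
    have hkey : P ^ (s + 1) * (qw - qv)
        = P ^ (s + 1) * (P ^ s * ((P - 1) * v ^ n' * k + k ^ 2 * P * c2)) := by
      rw [h1, hn', h2, hnc]; ring
    exact mul_left_cancel₀ hPr.ne' hkey
  -- pass from q to Q (the emod-reduced quotients)
  have hQw : eulerQuotientZ p (s + 1) w = qw % P ^ (s + 1) :=
    eulerQuotientZ_eq p (s + 1) hp.pos hw hqw
  have hQv : eulerQuotientZ p (s + 1) v = qv % P ^ (s + 1) :=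
    eulerQuotientZ_eq p (s + 1) hp.pos hv hqv
  have hmodeq : eulerQuotientZ p (s + 1) w - eulerQuotientZ p (s + 1) v
      ≡ qw - qv [ZMOD P ^ (s + 1)] := by
    rw [hQw, hQv]
    exact Int.ModEq.sub (Int.emod_emod_of_dvd qw dvd_rfl) (Int.emod_emod_of_dvd qv dvd_rfl)
  obtain ⟨d, hd⟩ := Int.ModEq.dvd hmodeq
  -- hd : (qw - qv) - (Qw - Qv) = P^(s+1) * d
  set E : ℤ := (P - 1) * v ^ n' * k + k ^ 2 * P * c2 - P * d with hE
  have hQdiff : eulerQuotientZ p (s + 1) w = eulerQuotientZ p (s + 1) v + E * P ^ s := by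
    have : (qw - qv) - (eulerQuotientZ p (s + 1) w - eulerQuotientZ p (s + 1) v)
        = P ^ (s + 1) * d := hd
    rw [hE]; rw [hqdiff] at this; linear_combination -this
  -- final computation
  have hsimp : s + 1 - 1 = s := rfl
  rw [levelQuotientZ, levelQuotientZ, hsimp, hQs, hQdiff]
  have hX : eulerQuotientZ p (s + 1) v + E * P ^ s - eulerQuotientZ p s v
      = (eulerQuotientZ p (s + 1) v - eulerQuotientZ p s v) + E * P ^ s := by ring
  rw [hX, Int.add_mul_ediv_right _ _ hPs.ne']
  -- it remains: (X + E) % P ≡ X % P - k * v^(p-2)  [ZMOD p]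
  set X : ℤ := (eulerQuotientZ p (s + 1) v - eulerQuotientZ p s v) / P ^ s with hXdef
  -- key congruence : E ≡ -(k * v^(p-2)) [ZMOD P]
  have hfermat : v ^ (p - 1) ≡ 1 [ZMOD P] := by
    have h := euler_dvd p 1 hp hv
    rw [pow_one, pow_one, Nat.totient_prime hp] at h
    exact (Int.modEq_iff_dvd.mpr (by simpa using dvd_neg.mpr h))
  have hvn : v ^ n ≡ 1 [ZMOD P] := by
    refine Int.modEq_iff_dvd.mpr ?_
    have : P ∣ P ^ (s + 1) := dvd_pow_self P (Nat.succ_ne_zero s)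
    have h2 : P ^ (s + 1) ∣ 1 - v ^ n := by rw [← neg_sub]; exact (dvd_neg).mpr ⟨qv, hqv⟩
    exact this.trans h2
  have hcancel : v ^ n' ≡ v ^ (p - 2) [ZMOD P] := by
    have hmul : v * v ^ n' ≡ v * v ^ (p - 2) [ZMOD P] := by
      have e1 : v * v ^ n' = v ^ n := by rw [hn']; ring
      have e2 : v * v ^ (p - 2) = v ^ (p - 1) := by
        rw [← pow_succ']
        congr 1
        have := hp.two_le
        omega
      rw [e1, e2]
      exact hvn.trans hfermat.symm
    have hgcd : Int.gcd P v = 1 := by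
      have := Int.isCoprime_iff_gcd_eq_one.mp hv
      rwa [Int.gcd_comm]
    have := Int.ModEq.cancel_left_div_gcd hp0 hmul
    simpa [hgcd] using this
  have hEcong : E ≡ -(k * v ^ (p - 2)) [ZMOD P] := by
    have h0 : E ≡ (0 - 1) * v ^ n' * k + k ^ 2 * 0 * c2 - 0 * d [ZMOD P] := by
      rw [hE]
      have hP0 : P ≡ 0 [ZMOD P] := (Int.modEq_iff_dvd.mpr (by simp)).symm
      exact (((hP0.sub_right 1).mul_right _).mul_right _ |>.add
        (((Int.ModEq.refl _).mul hP0).mul_right _)).sub (hP0.mul_right d)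
    refine h0.trans ?_
    have : (0 - 1 : ℤ) * v ^ n' * k + k ^ 2 * 0 * c2 - 0 * d = -(k * v ^ n') := by ring
    rw [this]
    exact (hcancel.mul_left k).neg
  -- conclude
  have h1 : (X + E) % P ≡ X + E [ZMOD P] := Int.emod_emod_of_dvd _ dvd_rfl
  have h2 : X % P ≡ X [ZMOD P] := Int.emod_emod_of_dvd _ dvd_rfl
  calc (X + E) % P ≡ X + E [ZMOD P] := h1
    _ ≡ X + -(k * v ^ (p - 2)) [ZMOD P] := (Int.ModEq.refl X).add hEcong
    _ = X - k * v ^ (p - 2) := by ring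
    _ ≡ X % P - k * v ^ (p - 2) [ZMOD P] := (h2.symm).sub (Int.ModEq.refl _)
end

section
/- Let p be an odd prime and r ≥ 1. The sequence (H_{r−1}(u))_{u≥0} over Z/p has least period p^{r+1}; that is, H_{r−1}(u + p^{r+1}) = H_{r−1}(u) for all u, and no smaller positive period exists. -/
/-- The highest-level quotient `H_{r-1}(u) = (Q_r(u) - Q_{r-1}(u))/p^{r-1} mod p`,
with values in `{0, …, p-1}`; zero when `p ∣ u`. -/
def levelQuotient (p r u : ℕ) : ℕ :=
  ((((eulerQuotient p r u : ℤ) - (eulerQuotient p (r - 1) u : ℤ)) / (p : ℤ) ^ (r - 1))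
    % (p : ℤ)).toNat

section Aux


lemma add_pow_of_sq {R : Type*} [CommRing R] (a b : R) (h : b * b = 0) :
    ∀ n : ℕ, (a + b) ^ (n + 1) = a ^ (n + 1) + ((n : R) + 1) * a ^ n * b := by
  intro n
  induction n with
  | zero => push_cast; ring
  | succ k ih =>
      calc (a + b) ^ (k + 1 + 1) = (a + b) ^ (k + 1) * (a + b) := by ring
        _ = (a ^ (k + 1) + ((k : R) + 1) * a ^ k * b) * (a + b) := by rw [ih]
        _ = a ^ (k + 2) + ((k : R) + 2) * a ^ (k + 1) * b + ((k : R) + 1) * a ^ k * (b * b) := by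
            ring
        _ = a ^ (k + 1 + 1) + ((((k:ℕ) + 1 : ℕ) : R) + 1) * a ^ (k + 1) * b := by
            rw [h]; push_cast; ring_nf

lemma pow_mod_add (m s N u : ℕ) (h2 : m ∣ s * s) :
    (u + s) ^ (N + 1) % m = (u ^ (N + 1) + (N + 1) * u ^ N * s) % m := by
  have hss : ((s : ZMod m)) * (s : ZMod m) = 0 := by
    obtain ⟨c, hc⟩ := h2
    have : ((s * s : ℕ) : ZMod m) = ((m * c : ℕ) : ZMod m) := by rw [hc]
    push_cast at this
    simpa [ZMod.natCast_self] using this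
  have key : (((u + s) ^ (N + 1) : ℕ) : ZMod m)
      = ((u ^ (N + 1) + (N + 1) * u ^ N * s : ℕ) : ZMod m) := by
    push_cast
    rw [add_pow_of_sq _ _ hss]
  exact (ZMod.natCast_eq_natCast_iff _ _ _).mp key


lemma mod_div_aux (q a : ℕ) (hq : 1 < q) (hmod : a % q = 1) :
    (a - 1) / q % q = (a % (q * q) - 1) / q := by
  have hq0 : 0 < q := by omega
  have hqq0 : 0 < q * q := by positivity
  set s := a % (q * q) with hs
  have hs1 : s % q = 1 := by
    rw [hs, Nat.mod_mod_of_dvd _ (Dvd.intro q rfl), hmod]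
  have hs_pos : 1 ≤ s := by
    rcases Nat.eq_zero_or_pos s with h | h
    · rw [h] at hs1; simp at hs1
    · exact h
  have ha_pos : 1 ≤ a := by
    rcases Nat.eq_zero_or_pos a with h | h
    · rw [h] at hmod; simp at hmod
    · exact h
  obtain ⟨d, hd⟩ : q ∣ s - 1 := by
    have h3 := Nat.div_add_mod s q
    exact Dvd.intro (s / q) (by omega)
  have hdvd_as : q * q ∣ a - s := by
    have h5 := Nat.div_add_mod a (q * q)
    exact ⟨a / (q * q), by omega⟩
  obtain ⟨c, hc⟩ := hdvd_as
  have hsa : s ≤ a := Nat.mod_le _ _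
  have hslt : s < q * q := Nat.mod_lt _ hqq0
  have hd_lt : d < q := by
    by_contra hdd
    push_neg at hdd
    have : q * q ≤ q * d := Nat.mul_le_mul_left _ hdd
    omega
  have hsplit : a - 1 = q * (q * c + d) := by
    have h6 : a - 1 = (a - s) + (s - 1) := by omega
    rw [h6, hc, hd]; ring
  rw [hsplit, hd, Nat.mul_div_cancel_left _ hq0, Nat.mul_div_cancel_left _ hq0,
    Nat.mul_add_mod, Nat.mod_eq_of_lt hd_lt]

lemma euler_aux (p t u : ℕ) (hp : p.Prime) (ht : 1 ≤ t) (hu : Nat.Coprime u p) :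
    eulerQuotient p t u = (u ^ (p ^ t).totient % p ^ (2 * t) - 1) / p ^ t := by
  have hq1 : 1 < p ^ t := Nat.one_lt_pow (by omega) hp.one_lt
  have hmod : u ^ (p ^ t).totient % p ^ t = 1 := by
    have h1 : u ^ (p ^ t).totient ≡ 1 [MOD p ^ t] := Nat.ModEq.pow_totient (hu.pow_right t)
    have h2 : u ^ (p ^ t).totient % p ^ t = 1 % p ^ t := h1
    rwa [Nat.mod_eq_of_lt hq1] at h2
  have hm : p ^ (2 * t) = p ^ t * p ^ t := by rw [← pow_add]; ring_nf
  rw [eulerQuotient, if_pos hu, hm]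
  exact mod_div_aux (p ^ t) _ hq1 hmod


variable (p r : ℕ)

lemma coprime_shift (hp : p.Prime) (u k : ℕ) (hk : 1 ≤ k) :
    Nat.Coprime (u + p ^ k) p ↔ Nat.Coprime u p := by
  have hdvd : p ∣ p ^ k := dvd_pow_self p (by omega)
  have key : p ∣ u + p ^ k ↔ p ∣ u := by
    rw [add_comm]; exact Nat.dvd_add_right hdvd
  have h2 : ∀ v : ℕ, Nat.Coprime v p ↔ ¬ p ∣ v := fun v => by
    rw [Nat.coprime_comm]; exact hp.coprime_iff_not_dvd
  rw [h2, h2, key]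


lemma totient_ppow (hp : p.Prime) (t : ℕ) (ht : 1 ≤ t) :
    (p ^ t).totient = p ^ (t - 1) * (p - 1) := by
  have := Nat.totient_prime_pow hp (n := t) (by omega)
  simpa using this

lemma eulerQuotient_period (hp : p.Prime) (hr : 1 ≤ r) (t : ℕ) (ht : t ≤ r) (u : ℕ) :
    eulerQuotient p t (u + p ^ (r + 1)) = eulerQuotient p t u := by
  rcases Nat.eq_zero_or_pos t with rfl | htpos
  · simp [eulerQuotient, Nat.mod_one]
  by_cases hu : Nat.Coprime u p
  · have hu' : Nat.Coprime (u + p ^ (r + 1)) p :=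
      (coprime_shift p hp u (r + 1) (by omega)).mpr hu
    rw [euler_aux p t u hp htpos hu, euler_aux p t _ hp htpos hu']
    set N := (p ^ t).totient with hN
    have hN1 : 1 ≤ N := Nat.totient_pos.mpr (pow_pos hp.pos _)
    have hNval : N = p ^ (t - 1) * (p - 1) := totient_ppow p hp t htpos
    have hdvd2 : p ^ (2 * t) ∣ p ^ (r + 1) * p ^ (r + 1) := by
      rw [← pow_add]
      exact pow_dvd_pow p (by omega)
    have hdvdN : p ^ (2 * t) ∣ N * p ^ (r + 1) := by
      rw [hNval, mul_comm (p ^ (t - 1)) (p - 1), mul_assoc, ← pow_add]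
      exact Dvd.dvd.mul_left (pow_dvd_pow p (by omega)) (p - 1)
    obtain ⟨N', hN'⟩ : ∃ N', N = N' + 1 := ⟨N - 1, by omega⟩
    rw [hN'] at hdvdN ⊢
    rw [pow_mod_add _ _ _ _ hdvd2]
    congr 2
    have : (u ^ (N' + 1) + (N' + 1) * u ^ N' * p ^ (r + 1)) ≡ u ^ (N' + 1) + 0 [MOD p ^ (2 * t)] := by
      refine Nat.ModEq.add_left _ ?_
      rw [Nat.modEq_zero_iff_dvd, mul_comm (N' + 1) (u ^ N'), mul_assoc]
      exact Dvd.dvd.mul_left hdvdN _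
    rw [add_zero] at this
    exact this
  · have hu' : ¬ Nat.Coprime (u + p ^ (r + 1)) p := fun h =>
      hu ((coprime_shift p hp u (r + 1) (by omega)).mp h)
    rw [eulerQuotient, if_neg hu', eulerQuotient, if_neg hu]

lemma eulerQuotient_one (t : ℕ) : eulerQuotient p t 1 = 0 := by
  simp [eulerQuotient, Nat.coprime_one_left, Nat.mod_one]

lemma levelQuotient_one : levelQuotient p r 1 = 0 := by
  simp [levelQuotient, eulerQuotient_one]

lemma eulerQuotient_at_r (hp : p.Prime) (hr : 1 ≤ r) :
    eulerQuotient p r (1 + p ^ r) = (p ^ r).totient := by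
  have hpr1 : 1 < p ^ r := Nat.one_lt_pow (by omega) hp.one_lt
  have hu : Nat.Coprime (1 + p ^ r) p := by
    have := coprime_shift p hp 1 r hr
    rw [this]; exact Nat.coprime_one_left p
  rw [euler_aux p r _ hp hr hu]
  set N := (p ^ r).totient with hN
  have hN1 : 1 ≤ N := Nat.totient_pos.mpr (pow_pos hp.pos _)
  have hNlt : N < p ^ r := Nat.totient_lt _ hpr1
  have hdvd2 : p ^ (2 * r) ∣ p ^ r * p ^ r := by rw [← pow_add]; exact pow_dvd_pow p (by omega)
  obtain ⟨N', hN'⟩ : ∃ N', N = N' + 1 := ⟨N - 1, by omega⟩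
  rw [hN', pow_mod_add _ _ _ _ hdvd2]
  simp only [one_pow, mul_one]
  have hmm : p ^ (2 * r) = p ^ r * p ^ r := by rw [← pow_add]; ring_nf
  have hlt : 1 + (N' + 1) * p ^ r < p ^ (2 * r) := by
    rw [hmm]
    have h1 : (N' + 1) * p ^ r ≤ (p ^ r - 1) * p ^ r := by
      apply Nat.mul_le_mul_right
      omega
    have h2 : (p ^ r - 1) * p ^ r + p ^ r = p ^ r * p ^ r := by
      rw [Nat.sub_mul]
      have : p ^ r ≤ p ^ r * p ^ r := Nat.le_mul_of_pos_left _ (by omega)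
      omega
    omega
  rw [Nat.mod_eq_of_lt hlt, Nat.add_sub_cancel_left, Nat.mul_div_cancel _ (by omega)]

lemma eulerQuotient_at_rm1 (hp : p.Prime) (hr : 1 ≤ r) :
    eulerQuotient p (r - 1) (1 + p ^ r) = 0 := by
  rcases Nat.lt_or_ge r 2 with h2 | h2
  · have : r = 1 := by omega
    subst this
    simp [eulerQuotient, Nat.mod_one]
  · have ht : 1 ≤ r - 1 := by omega
    have hu : Nat.Coprime (1 + p ^ r) p := by
      rw [coprime_shift p hp 1 r hr]; exact Nat.coprime_one_left p
    rw [euler_aux p (r - 1) _ hp ht hu]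
    set M := (p ^ (r - 1)).totient with hM
    have hM1 : 1 ≤ M := Nat.totient_pos.mpr (pow_pos hp.pos _)
    have hMval : M = p ^ (r - 2) * (p - 1) := by
      have := totient_ppow p hp (r - 1) ht
      simpa [show r - 1 - 1 = r - 2 by omega] using this
    have hdvd2 : p ^ (2 * (r - 1)) ∣ p ^ r * p ^ r := by
      rw [← pow_add]; exact pow_dvd_pow p (by omega)
    obtain ⟨M', hM'⟩ : ∃ M', M = M' + 1 := ⟨M - 1, by omega⟩
    rw [hM', pow_mod_add _ _ _ _ hdvd2]
    have hmod0 : (1 ^ (M' + 1) + (M' + 1) * 1 ^ M' * p ^ r) % p ^ (2 * (r - 1)) = 1 := by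
      have hdM : p ^ (2 * (r - 1)) ∣ (M' + 1) * 1 ^ M' * p ^ r := by
        rw [one_pow, mul_one, ← hM', hMval, mul_comm (p ^ (r - 2)) (p - 1), mul_assoc, ← pow_add]
        exact Dvd.dvd.mul_left (pow_dvd_pow p (by omega)) (p - 1)
      obtain ⟨c, hc⟩ := hdM
      rw [hc]
      simp only [one_pow]
      rw [Nat.add_mul_mod_self_left]
      exact Nat.mod_eq_of_lt (Nat.one_lt_pow (by omega) hp.one_lt)
    rw [hmod0]
    simp


lemma levelQuotient_at (hp : p.Prime) (hr : 1 ≤ r) :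
    levelQuotient p r (1 + p ^ r) = p - 1 := by
  rw [levelQuotient, eulerQuotient_at_r p r hp hr, eulerQuotient_at_rm1 p r hp hr,
    totient_ppow p hp r hr]
  have hp0 : ((p : ℤ)) ^ (r - 1) ≠ 0 := pow_ne_zero _ (by exact_mod_cast hp.pos.ne')
  have h1 : ((p ^ (r - 1) * (p - 1) : ℕ) : ℤ) = (p : ℤ) ^ (r - 1) * ((p - 1 : ℕ) : ℤ) := by
    push_cast; ring
  rw [h1]
  simp only [Nat.cast_zero, sub_zero]
  rw [Int.mul_ediv_cancel_left _ hp0]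
  have hlt : ((p - 1 : ℕ) : ℤ) < (p : ℤ) := by
    have := hp.one_lt; omega
  rw [Int.emod_eq_of_lt (by positivity) hlt]
  simp

lemma period_mul {α : Type*} (f : ℕ → α) (a : ℕ) (h : ∀ u, f (u + a) = f u) :
    ∀ k u, f (u + k * a) = f u := by
  intro k
  induction k with
  | zero => simp
  | succ n ih =>
      intro u
      have : u + (n + 1) * a = (u + a) + n * a := by ring
      rw [this, ih, h]

lemma period_gcd {α : Type*} (f : ℕ → α) (a b : ℕ) (ha : 0 < a) (hb : 0 < b)
    (hfa : ∀ u, f (u + a) = f u) (hfb : ∀ u, f (u + b) = f u) :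
    ∀ u, f (u + Nat.gcd a b) = f u := by
  intro u
  set g := Nat.gcd a b with hg
  have hbez := Nat.gcd_eq_gcd_ab a b
  set A := Nat.gcdA a b with hA
  set B := Nat.gcdB a b with hB
  set n : ℕ := A.natAbs + B.natAbs + 1 with hn
  have hx : (0 : ℤ) ≤ A + n * b := by
    have h1 : (A.natAbs : ℤ) ≥ -A := by omega
    have h2 : (n : ℤ) * b ≥ n := by
      have : (1 : ℤ) ≤ b := by exact_mod_cast hb
      nlinarith [Int.natCast_nonneg n]
    omega
  have hy : (0 : ℤ) ≤ n * a - B := by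
    have h2 : (n : ℤ) * a ≥ n := by
      have : (1 : ℤ) ≤ a := by exact_mod_cast ha
      nlinarith [Int.natCast_nonneg n]
    omega
  set x : ℕ := (A + n * b).toNat with hxd
  set y : ℕ := (n * a - B).toNat with hyd
  have key : g + y * b = x * a := by
    have hxz : (x : ℤ) = A + n * b := by rw [hxd]; exact Int.toNat_of_nonneg hx
    have hyz : (y : ℤ) = n * a - B := by rw [hyd]; exact Int.toNat_of_nonneg hy
    have : (g : ℤ) + y * b = x * a := by
      rw [hxz, hyz, hbez]; push_cast; ring
    exact_mod_cast this
  calc f (u + g) = f (u + g + y * b) := (period_mul f b hfb y (u + g)).symm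
    _ = f (u + x * a) := by rw [show u + g + y * b = u + x * a by omega]
    _ = f u := period_mul f a hfa x u


end Aux

/-- The sequence `(H_{r-1}(u))_{u ≥ 0}` has least period `p^{r+1}`. -/
theorem levelQuotient_least_period (p r : ℕ) (hp : p.Prime) (hodd : Odd p) (hr : 1 ≤ r) :
    (∀ u : ℕ, levelQuotient p r (u + p ^ (r + 1)) = levelQuotient p r u) ∧
    (∀ T : ℕ, 0 < T → (∀ u : ℕ, levelQuotient p r (u + T) = levelQuotient p r u) →
      p ^ (r + 1) ≤ T) := by
  have hper : ∀ u : ℕ, levelQuotient p r (u + p ^ (r + 1)) = levelQuotient p r u := by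
    intro u
    rw [levelQuotient, levelQuotient, eulerQuotient_period p r hp hr r le_rfl u,
      eulerQuotient_period p r hp hr (r - 1) (by omega) u]
  refine ⟨hper, ?_⟩
  intro T hT hTper
  by_contra hcon
  push_neg at hcon
  set f := levelQuotient p r with hf
  set g := Nat.gcd T (p ^ (r + 1)) with hg
  have hP0 : 0 < p ^ (r + 1) := pow_pos hp.pos _
  have hgper : ∀ u, f (u + g) = f u := period_gcd f T (p ^ (r + 1)) hT hP0 hTper hper
  have hgdvd : g ∣ p ^ (r + 1) := Nat.gcd_dvd_right _ _
  have hgle : g ≤ T := Nat.le_of_dvd hT (Nat.gcd_dvd_left _ _)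
  obtain ⟨j, hj, hje⟩ := (Nat.dvd_prime_pow hp).mp hgdvd
  have hjr : j ≤ r := by
    by_contra hjj
    push_neg at hjj
    have : j = r + 1 := by omega
    rw [this] at hje
    omega
  have hgdvd' : g ∣ p ^ r := hje ▸ pow_dvd_pow p hjr
  obtain ⟨c, hc⟩ := hgdvd'
  have hprper : ∀ u, f (u + p ^ r) = f u := by
    intro u
    rw [hc, mul_comm]
    exact period_mul f g hgper c u
  have hcontra := hprper 1
  rw [hf] at hcontra
  rw [levelQuotient_at p r hp hr, levelQuotient_one] at hcontra
  have := hp.two_le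
  omega
end

section
/- Let p be an odd prime, r ≥ 2, l ∈ {0,…,p−1}, D_l = {u : 0 ≤ u < p^{r+1}, gcd(u,p)=1, H_{r−1}(u)=l}, and let θ be an element of an algebraic closure of F₂ with θ^{p^r} = 1 but θ^p ≠ 1. Then Σ_{u ∈ D_l} θ^u = 0. -/
open Finset

lemma binom1 (a c : ℤ) (n : ℕ) :
    (a + c) ^ (n + 1) ≡ a ^ (n + 1) + (n + 1) * a ^ n * c [ZMOD c ^ 2] := by
  induction n with
  | zero => simpa using Int.ModEq.refl _
  | succ n ih =>
    calc (a + c) ^ (n + 2) = (a + c) * (a + c) ^ (n + 1) := by ring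
    _ ≡ (a + c) * (a ^ (n + 1) + (n + 1) * a ^ n * c) [ZMOD c ^ 2] := ih.mul_left _
    _ ≡ a ^ (n + 2) + (n + 2) * a ^ (n + 1) * c [ZMOD c ^ 2] := by
        apply Int.ModEq.symm
        rw [Int.modEq_iff_dvd]
        refine ⟨(n + 1) * a ^ n, ?_⟩
        push_cast
        ring

lemma binom2 (c : ℤ) (n : ℕ) :
    (1 + c) ^ n ≡ 1 + n * c + (n.choose 2) * c ^ 2 [ZMOD c ^ 3] := by
  induction n with
  | zero => simpa using Int.ModEq.refl _
  | succ n ih =>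
    calc (1 + c) ^ (n + 1) = (1 + c) * (1 + c) ^ n := by ring
    _ ≡ (1 + c) * (1 + n * c + (n.choose 2) * c ^ 2) [ZMOD c ^ 3] := ih.mul_left _
    _ ≡ 1 + (n + 1) * c + ((n + 1).choose 2) * c ^ 2 [ZMOD c ^ 3] := by
        apply Int.ModEq.symm
        rw [Int.modEq_iff_dvd]
        refine ⟨(n.choose 2 : ℤ), ?_⟩
        have h : (n + 1).choose 2 = n.choose 2 + n := by
          rw [Nat.choose_succ_succ, Nat.choose_one_right, Nat.add_comm]
        rw [h]
        push_cast
        ring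

lemma coprime_pos {p u : ℕ} (hp : p.Prime) (h : Nat.Coprime u p) : 1 ≤ u := by
  rcases Nat.eq_zero_or_pos u with h0 | h0
  · exfalso
    subst h0
    simp [Nat.Coprime] at h
    exact hp.one_lt.ne' h
  · exact h0

lemma eulerQuotient_cast {p : ℕ} (hp : p.Prime) {u : ℕ} (h : Nat.Coprime u p) (t : ℕ) :
    (eulerQuotient p t u : ℤ) =
      (((u : ℤ) ^ (p ^ t).totient - 1) / (p : ℤ) ^ t) % (p : ℤ) ^ t := by
  have hu : 1 ≤ u ^ (p ^ t).totient := Nat.one_le_pow _ _ (coprime_pos hp h)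
  rw [eulerQuotient, if_pos h]
  rw [Int.natCast_mod, Int.natCast_div]
  push_cast [hu]
  ring_nf

lemma pow_totient_dvd {p : ℕ} (hp : p.Prime) {u : ℕ} (h : Nat.Coprime u p) (t : ℕ) :
    (p : ℤ) ^ t ∣ (u : ℤ) ^ (p ^ t).totient - 1 := by
  have h' : Nat.Coprime (u ^ (p ^ t).totient) 1 := Nat.coprime_one_right _
  have hm : ((u ^ (p ^ t).totient : ℕ) : ℤ) ≡ ((1 : ℕ) : ℤ) [ZMOD ((p ^ t : ℕ) : ℤ)] :=
    Int.natCast_modEq_iff.mpr (Nat.ModEq.pow_totient (h.pow_right t))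
  have := hm.dvd
  push_cast at this
  have h2 := dvd_neg.mpr this
  rwa [neg_sub] at h2


lemma cancel_pow {P : ℤ} (hP : P ≠ 0) {a : ℤ} (n m : ℕ) (h : P ^ (n + m) ∣ P ^ n * a) :
    P ^ m ∣ a := by
  rw [pow_add] at h
  exact (mul_dvd_mul_iff_left (pow_ne_zero n hP)).mp h

lemma eulerQuotient_modEq_s10 {p : ℕ} (hp : p.Prime) {w : ℕ} (hw : Nat.Coprime w p)
    {t m : ℕ} (hm : m ≤ t) :
    (eulerQuotient p t w : ℤ) ≡ ((w : ℤ) ^ (p ^ t).totient - 1) / (p : ℤ) ^ t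
      [ZMOD (p : ℤ) ^ m] := by
  rw [eulerQuotient_cast hp hw]
  exact Int.emod_emod_of_dvd _ (pow_dvd_pow _ hm)

lemma totient_cast {p : ℕ} (hp : p.Prime) (n : ℕ) (hn : 0 < n) :
    ((p ^ n).totient : ℤ) = (p : ℤ) ^ (n - 1) * ((p : ℤ) - 1) := by
  rw [Nat.totient_prime_pow hp hn]
  push_cast [Nat.cast_sub hp.one_le]
  ring

lemma eulerQuotient_sub_dvd {p r : ℕ} (hp : p.Prime) (hodd : Odd p) (hr : 2 ≤ r)
    {w : ℕ} (hw : Nat.Coprime w p) :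
    (p : ℤ) ^ (r - 1) ∣ (eulerQuotient p r w : ℤ) - (eulerQuotient p (r - 1) w : ℤ) := by
  obtain ⟨s, rfl⟩ : ∃ s, r = s + 2 := ⟨r - 2, by omega⟩
  have hP0 : (p : ℤ) ≠ 0 := Int.natCast_ne_zero.mpr hp.pos.ne'
  set P : ℤ := (p : ℤ) with hPdef
  set W : ℤ := (w : ℤ) with hWdef
  set N := (p ^ (s + 2)).totient with hN
  set M := (p ^ (s + 1)).totient with hM
  have hNM : N = M * p := by
    rw [hN, hM, Nat.totient_prime_pow hp (by omega), Nat.totient_prime_pow hp (by omega)]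
    simp [pow_succ]
    ring
  obtain ⟨A, hAeq⟩ : P ^ (s + 2) ∣ W ^ N - 1 := pow_totient_dvd hp hw (s + 2)
  obtain ⟨B, hBeq⟩ : P ^ (s + 1) ∣ W ^ M - 1 := pow_totient_dvd hp hw (s + 1)
  set c : ℤ := P ^ (s + 1) * B with hc
  have hWM : W ^ M = 1 + c := by linarith [hBeq]
  have hWN : W ^ N = (1 + c) ^ p := by rw [hNM, pow_mul, hWM]
  have hkey : P ^ (2 * s + 3) ∣ P ^ (s + 2) * (A - B) := by
    have h1 : P ^ (s + 2) * (A - B) = ((1 + c) ^ p - (1 + p * c + (p.choose 2) * c ^ 2))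
        + ((p.choose 2) * c ^ 2) := by
      rw [← hWN]
      have : P ^ (s + 2) * B = P * c := by rw [hc]; ring
      nlinarith [hAeq, this]
    rw [h1]
    refine dvd_add ?_ ?_
    · have h2 : c ^ 3 ∣ (1 + c) ^ p - (1 + p * c + (p.choose 2) * c ^ 2) := by
        have := (binom2 c p).dvd
        have h3 := dvd_neg.mpr this
        rw [neg_sub] at h3
        exact h3
      refine dvd_trans ?_ h2
      rw [hc]
      calc P ^ (2 * s + 3) ∣ P ^ (3 * s + 3) := pow_dvd_pow _ (by omega)
      _ ∣ (P ^ (s + 1) * B) ^ 3 := ⟨B ^ 3, by ring⟩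
    · have hpc : P ∣ (p.choose 2 : ℤ) := by
        have h2le := hp.two_le
        have : p ∣ p.choose 2 := hp.dvd_choose_self (by norm_num)
          (by rcases hodd with ⟨t, ht⟩; omega)
        rw [hPdef]
        exact_mod_cast this
      obtain ⟨d, hd⟩ := hpc
      rw [hd, hc]
      exact ⟨d * B ^ 2, by ring⟩
  have hAB : P ^ (s + 1) ∣ A - B := by
    refine cancel_pow hP0 (s + 2) (s + 1) ?_
    have : s + 2 + (s + 1) = 2 * s + 3 := by omega
    rw [this]
    exact hkey
  have e1 : (eulerQuotient p (s + 2) w : ℤ) ≡ A [ZMOD P ^ (s + 1)] := by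
    have := eulerQuotient_modEq_s10 hp hw (t := s + 2) (m := s + 1) (by omega)
    rwa [hAeq, Int.mul_ediv_cancel_left _ (pow_ne_zero _ hP0)] at this
  have e2 : (eulerQuotient p (s + 1) w : ℤ) ≡ B [ZMOD P ^ (s + 1)] := by
    have := eulerQuotient_modEq_s10 hp hw (t := s + 1) (m := s + 1) le_rfl
    rwa [hBeq, Int.mul_ediv_cancel_left _ (pow_ne_zero _ hP0)] at this
  have e3 : (eulerQuotient p (s + 2) w : ℤ) - (eulerQuotient p (s + 1) w : ℤ)
      ≡ A - B [ZMOD P ^ (s + 1)] := e1.sub e2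
  have e4 := e3.dvd
  show P ^ (s + 2 - 1) ∣ _
  have hs1 : s + 2 - 1 = s + 1 := rfl
  rw [hs1]
  have := dvd_sub hAB e4
  simpa using this

lemma modEq_of_dvd_sub {n a b : ℤ} (h : n ∣ a - b) : a ≡ b [ZMOD n] :=
  Int.modEq_iff_dvd.mpr (by have := dvd_neg.mpr h; rwa [neg_sub] at this)

lemma dvd_sub_of_modEq {n a b : ℤ} (h : a ≡ b [ZMOD n]) : n ∣ a - b := h.symm.dvd

lemma levelQuotient_lt {p : ℕ} (hp : 0 < p) (r u : ℕ) : levelQuotient p r u < p := by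
  rw [levelQuotient]
  have hP : (0 : ℤ) < (p : ℤ) := by exact_mod_cast hp
  have h1 := Int.emod_lt_of_pos
    ((((eulerQuotient p r u : ℤ) - (eulerQuotient p (r - 1) u : ℤ)) / (p : ℤ) ^ (r - 1))) hP
  have h2 := Int.emod_nonneg
    ((((eulerQuotient p r u : ℤ) - (eulerQuotient p (r - 1) u : ℤ)) / (p : ℤ) ^ (r - 1)))
    hP.ne'
  omega

lemma levelQuotient_shift {p r : ℕ} (hp : p.Prime) (hodd : Odd p) (hr : 2 ≤ r)
    {v : ℕ} (hv : Nat.Coprime v p) (k : ℕ) :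
    ((levelQuotient p r (v + k * p ^ r) : ℤ)) ≡
      (levelQuotient p r v : ℤ)
        + ((p : ℤ) - 1) * (v : ℤ) ^ ((p ^ r).totient - 1) * (k : ℤ) [ZMOD (p : ℤ)] := by
  obtain ⟨s, rfl⟩ : ∃ s, r = s + 2 := ⟨r - 2, by omega⟩
  have hP0 : (p : ℤ) ≠ 0 := Int.natCast_ne_zero.mpr hp.pos.ne'
  set P : ℤ := (p : ℤ) with hPdef
  set u := v + k * p ^ (s + 2) with hu_def
  have hu : Nat.Coprime u p := by
    have h : u = v + (k * p ^ (s + 1)) * p := by rw [hu_def]; ring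
    rw [h]
    exact (Nat.coprime_add_mul_right_left v p _).mpr hv
  set N := (p ^ (s + 2)).totient with hN
  set M := (p ^ (s + 1)).totient with hM
  have hM1 : M - 1 + 1 = M :=
    Nat.succ_pred_eq_of_pos (Nat.totient_pos.mpr (pow_pos hp.pos _))
  have hN1 : N - 1 + 1 = N :=
    Nat.succ_pred_eq_of_pos (Nat.totient_pos.mpr (pow_pos hp.pos _))
  have htM : (M : ℤ) = P ^ s * (P - 1) := by
    have := totient_cast hp (s + 1) (by omega)
    simpa [hM] using this
  have htN : (N : ℤ) = P ^ (s + 1) * (P - 1) := by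
    have := totient_cast hp (s + 2) (by omega)
    simpa [hN] using this
  set V : ℤ := (v : ℤ) with hV
  set c : ℤ := (k : ℤ) * P ^ (s + 2) with hc
  have hU : ((u : ℕ) : ℤ) = V + c := by rw [hu_def]; push_cast; ring
  obtain ⟨A, hAeq⟩ : P ^ (s + 2) ∣ V ^ N - 1 := pow_totient_dvd hp hv (s + 2)
  obtain ⟨B, hBeq⟩ : P ^ (s + 1) ∣ V ^ M - 1 := pow_totient_dvd hp hv (s + 1)
  obtain ⟨AU, hAUeq⟩ : P ^ (s + 2) ∣ ((u : ℕ) : ℤ) ^ N - 1 := pow_totient_dvd hp hu (s + 2)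
  obtain ⟨BU, hBUeq⟩ : P ^ (s + 1) ∣ ((u : ℕ) : ℤ) ^ M - 1 := pow_totient_dvd hp hu (s + 1)
  rw [hU] at hAUeq hBUeq
  -- step (a) : P^(2s+2) ∣ (V+c)^M - V^M
  have hcastM : ((M - 1 : ℕ) : ℤ) + 1 = (M : ℤ) := by omega
  have hbM := binom1 V c (M - 1)
  rw [hM1, hcastM] at hbM
  have hstepA : P ^ (2 * s + 2) ∣ (V + c) ^ M - V ^ M := by
    have h1 : (V + c) ^ M - V ^ M
        = ((V + c) ^ M - (V ^ M + (M : ℤ) * V ^ (M - 1) * c)) + (M : ℤ) * V ^ (M - 1) * c := by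
      ring
    rw [h1]
    refine dvd_add (dvd_trans ?_ (dvd_sub_of_modEq hbM)) ?_
    · exact ⟨(k : ℤ) ^ 2 * P ^ 2, by rw [hc]; ring⟩
    · exact ⟨(P - 1) * V ^ (M - 1) * (k : ℤ), by rw [htM, hc]; ring⟩
  have hBB : P ^ (s + 1) ∣ BU - B := by
    refine cancel_pow hP0 (s + 1) (s + 1) ?_
    have h' : P ^ (s + 1) * (BU - B) = (V + c) ^ M - V ^ M := by
      rw [mul_sub, ← hBUeq, ← hBeq]; ring
    rw [h', show s + 1 + (s + 1) = 2 * s + 2 from by omega]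
    exact hstepA
  -- equality of the lower Euler quotients
  have hQm : (eulerQuotient p (s + 1) u : ℤ) = (eulerQuotient p (s + 1) v : ℤ) := by
    rw [eulerQuotient_cast hp hu (s + 1), eulerQuotient_cast hp hv (s + 1), hU, ← hPdef]
    rw [hBUeq, hBeq, Int.mul_ediv_cancel_left _ (pow_ne_zero _ hP0),
      Int.mul_ediv_cancel_left _ (pow_ne_zero _ hP0)]
    exact modEq_of_dvd_sub hBB
  -- step (b) : N-level congruence
  have hcastN : ((N - 1 : ℕ) : ℤ) + 1 = (N : ℤ) := by omega
  have hbN := binom1 V c (N - 1)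
  rw [hN1, hcastN] at hbN
  have hUN : P ^ (2 * s + 4) ∣ (V + c) ^ N - (V ^ N + (N : ℤ) * V ^ (N - 1) * c) := by
    refine dvd_trans ?_ (dvd_sub_of_modEq hbN)
    exact ⟨(k : ℤ) ^ 2, by rw [hc]; ring⟩
  have hAA : P ^ (s + 2) ∣ AU - A - P ^ (s + 1) * (P - 1) * V ^ (N - 1) * (k : ℤ) := by
    refine cancel_pow hP0 (s + 2) (s + 2) ?_
    have h' : P ^ (s + 2) * (AU - A - P ^ (s + 1) * (P - 1) * V ^ (N - 1) * (k : ℤ))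
        = (V + c) ^ N - (V ^ N + (N : ℤ) * V ^ (N - 1) * c) := by
      rw [mul_sub, mul_sub, ← hAUeq, ← hAeq, htN, hc]; ring
    rw [h', show s + 2 + (s + 2) = 2 * s + 4 from by omega]
    exact hUN
  -- level quotients
  obtain ⟨eu, hDu⟩ := eulerQuotient_sub_dvd hp hodd (by omega : 2 ≤ s + 2) hu
  obtain ⟨ev, hDv⟩ := eulerQuotient_sub_dvd hp hodd (by omega : 2 ≤ s + 2) hv
  have hlq : ∀ (w : ℕ) (e : ℤ),
      (eulerQuotient p (s + 2) w : ℤ) - (eulerQuotient p (s + 2 - 1) w : ℤ) = P ^ (s + 2 - 1) * e →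
      ((levelQuotient p (s + 2) w : ℕ) : ℤ) = e % P := by
    intro w e he
    rw [levelQuotient, Int.toNat_of_nonneg (Int.emod_nonneg _ hP0), he,
      Int.mul_ediv_cancel_left _ (pow_ne_zero _ hP0)]
  have hlu := hlq u eu hDu
  have hlv := hlq v ev hDv
  -- main congruence on e's
  have hQru : (eulerQuotient p (s + 2) u : ℤ) ≡ AU [ZMOD P ^ (s + 2)] := by
    have h := eulerQuotient_modEq_s10 hp hu (t := s + 2) (m := s + 2) le_rfl
    rwa [hU, ← hN, hAUeq, Int.mul_ediv_cancel_left _ (pow_ne_zero _ hP0)] at h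
  have hQrv : (eulerQuotient p (s + 2) v : ℤ) ≡ A [ZMOD P ^ (s + 2)] := by
    have h := eulerQuotient_modEq_s10 hp hv (t := s + 2) (m := s + 2) le_rfl
    rwa [← hN, hAeq, Int.mul_ediv_cancel_left _ (pow_ne_zero _ hP0)] at h
  have hmain : P ∣ eu - ev - (P - 1) * V ^ (N - 1) * (k : ℤ) := by
    have hc0 : P ^ (s + 1 + 1) ∣ P ^ (s + 1) * (eu - ev - (P - 1) * V ^ (N - 1) * (k : ℤ)) := ?_
    · have := cancel_pow hP0 (s + 1) 1 hc0
      rwa [pow_one] at this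
    have h1 : P ^ (s + 1) * (eu - ev - (P - 1) * V ^ (N - 1) * (k : ℤ))
        = ((eulerQuotient p (s + 2) u : ℤ) - (eulerQuotient p (s + 2) v : ℤ))
          - P ^ (s + 1) * (P - 1) * V ^ (N - 1) * (k : ℤ) := by
      have e1 : (eulerQuotient p (s + 2) u : ℤ) - (eulerQuotient p (s + 2 - 1) u : ℤ)
          = P ^ (s + 1) * eu := hDu
      have e2 : (eulerQuotient p (s + 2) v : ℤ) - (eulerQuotient p (s + 2 - 1) v : ℤ)
          = P ^ (s + 1) * ev := hDv
      have e3 : (eulerQuotient p (s + 2 - 1) u : ℤ) = (eulerQuotient p (s + 2 - 1) v : ℤ) := hQm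
      rw [mul_sub, mul_sub, ← e1, ← e2, e3]
      ring
    rw [show s + 1 + 1 = s + 2 from rfl, h1]
    have h2 : (eulerQuotient p (s + 2) u : ℤ) - (eulerQuotient p (s + 2) v : ℤ)
        ≡ AU - A [ZMOD P ^ (s + 2)] := hQru.sub hQrv
    have h3 := dvd_sub_of_modEq h2
    have := dvd_sub h3 hAA
    have h4 : (eulerQuotient p (s + 2) u : ℤ) - (eulerQuotient p (s + 2) v : ℤ)
          - P ^ (s + 1) * (P - 1) * V ^ (N - 1) * (k : ℤ)
        = ((eulerQuotient p (s + 2) u : ℤ) - (eulerQuotient p (s + 2) v : ℤ) - (AU - A))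
          + (AU - A - P ^ (s + 1) * (P - 1) * V ^ (N - 1) * (k : ℤ)) := by ring
    rw [h4]
    exact dvd_add h3 hAA
  -- conclude
  rw [hlu, hlv]
  calc eu % P ≡ eu [ZMOD P] := Int.emod_emod_of_dvd _ dvd_rfl
  _ ≡ ev + (P - 1) * V ^ (N - 1) * (k : ℤ) [ZMOD P] := by
      refine modEq_of_dvd_sub ?_
      have h5 : eu - (ev + (P - 1) * V ^ (N - 1) * (k : ℤ))
          = eu - ev - (P - 1) * V ^ (N - 1) * (k : ℤ) := by ring
      rw [h5]; exact hmain
  _ ≡ ev % P + (P - 1) * V ^ (N - 1) * (k : ℤ) [ZMOD P] :=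
      Int.ModEq.add_right _ (Int.emod_emod_of_dvd _ dvd_rfl).symm

lemma exists_unique_k {p r : ℕ} (hp : p.Prime) (hodd : Odd p) (hr : 2 ≤ r)
    {v : ℕ} (hv : Nat.Coprime v p) {l : ℕ} (hl : l < p) :
    ∃! k, k < p ∧ levelQuotient p r (v + k * p ^ r) = l := by
  haveI : Fact p.Prime := ⟨hp⟩
  set H : ZMod p := (levelQuotient p r v : ZMod p) with hH
  set cu : ZMod p := -((v : ZMod p) ^ ((p ^ r).totient - 1)) with hcu
  have hv0 : (v : ZMod p) ≠ 0 := by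
    rw [Ne, ZMod.natCast_eq_zero_iff]
    exact (hp.coprime_iff_not_dvd.mp hv.symm)
  have hcu0 : cu ≠ 0 := by
    rw [hcu, neg_ne_zero]
    exact pow_ne_zero _ hv0
  have hfk : ∀ k : ℕ, (levelQuotient p r (v + k * p ^ r) : ZMod p) = H + cu * k := by
    intro k
    have h := levelQuotient_shift hp hodd hr hv k
    have h2 := (ZMod.intCast_eq_intCast_iff _ _ _).mpr h
    push_cast at h2
    rw [h2, hH, hcu]
    have : ((p : ZMod p)) = 0 := ZMod.natCast_self p
    rw [this]
    ring
  have hval : ∀ k : ℕ, k < p → ((k : ZMod p)) = ((l : ZMod p) - H) * cu⁻¹ →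
      levelQuotient p r (v + k * p ^ r) = l := by
    intro k hk hkeq
    have h := hfk k
    rw [hkeq] at h
    have h2 : (levelQuotient p r (v + k * p ^ r) : ZMod p) = (l : ZMod p) := by
      rw [h]
      field_simp
      ring
    have h3 := congrArg ZMod.val h2
    rwa [ZMod.val_cast_of_lt (levelQuotient_lt hp.pos _ _),
      ZMod.val_cast_of_lt hl] at h3
  refine ⟨(((l : ZMod p) - H) * cu⁻¹).val, ⟨ZMod.val_lt _, ?_⟩, ?_⟩
  · exact hval _ (ZMod.val_lt _) (ZMod.natCast_rightInverse _)
  · rintro k ⟨hk, hkl⟩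
    have h := hfk k
    rw [hkl] at h
    have hkeq : (k : ZMod p) = ((l : ZMod p) - H) * cu⁻¹ := by
      rw [eq_mul_inv_iff_mul_eq₀ hcu0]
      linear_combination -h
    have := congrArg ZMod.val hkeq
    rwa [ZMod.val_cast_of_lt hk] at this

/-- For `θ` in the algebraic closure of `F₂` with `θ^{p^r} = 1` but `θ^p ≠ 1`,
`Σ_{u ∈ D_l} θ^u = 0`. -/
theorem sum_Dl_pow_eq_zero (p r l : ℕ) (hp : p.Prime) (hodd : Odd p) (hr : 2 ≤ r)
    (hl : l < p) (θ : AlgebraicClosure (ZMod 2)) (h1 : θ ^ p ^ r = 1) (h2 : θ ^ p ≠ 1) :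
    ∑ u ∈ (Finset.range (p ^ (r + 1))).filter
        (fun u => Nat.Coprime u p ∧ levelQuotient p r u = l), θ ^ u = 0 := by
  have hθ1 : θ ≠ 1 := fun h => h2 (by rw [h, one_pow])
  have hgeom : ∑ i ∈ Finset.range (p ^ r), θ ^ i = 0 := by
    rw [geom_sum_eq hθ1, h1]; simp
  have hppow : p * p ^ (r - 1) = p ^ r := by
    conv_rhs => rw [show r = 1 + (r - 1) from by omega]
    rw [pow_add, pow_one]
  have hθp1 : (θ ^ p) ^ (p ^ (r - 1)) = 1 := by
    rw [← pow_mul, hppow, h1]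
  have hgeom2 : ∑ i ∈ Finset.range (p ^ (r - 1)), (θ ^ p) ^ i = 0 := by
    rw [geom_sum_eq h2, hθp1]; simp
  have hprpos : 0 < p ^ r := pow_pos hp.pos r
  have hpr1 : p ^ (r - 1) * p = p ^ r := by rw [mul_comm]; exact hppow
  have hcoiff : ∀ (v k : ℕ), Nat.Coprime (v + k * p ^ r) p ↔ Nat.Coprime v p := by
    intro v k
    have h : v + k * p ^ r = v + (k * p ^ (r - 1)) * p := by
      rw [mul_assoc, hpr1]
    rw [h]
    exact Nat.coprime_add_mul_right_left v p _
  have hstep1 : ∑ u ∈ (Finset.range (p ^ (r + 1))).filter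
        (fun u => Nat.Coprime u p ∧ levelQuotient p r u = l), θ ^ u
      = ∑ x ∈ (Finset.range p ×ˢ Finset.range (p ^ r)).filter
        (fun x : ℕ × ℕ => Nat.Coprime (x.2 + x.1 * p ^ r) p
          ∧ levelQuotient p r (x.2 + x.1 * p ^ r) = l),
        θ ^ x.2 := by
    refine Finset.sum_nbij' (fun u => (u / p ^ r, u % p ^ r))
      (fun x => x.2 + x.1 * p ^ r) ?_ ?_ ?_ ?_ ?_
    · intro a ha
      simp only [Finset.mem_filter, Finset.mem_range, Finset.mem_product] at ha ⊢
      obtain ⟨ha1, hcond⟩ := ha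
      refine ⟨⟨?_, Nat.mod_lt _ hprpos⟩, ?_⟩
      · rw [Nat.div_lt_iff_lt_mul hprpos]
        rw [pow_succ] at ha1
        rwa [mul_comm]
      · rwa [Nat.mod_add_div']
    · intro x hx
      simp only [Finset.mem_filter, Finset.mem_range, Finset.mem_product] at hx ⊢
      obtain ⟨⟨hx1, hx2⟩, hcond⟩ := hx
      refine ⟨?_, hcond⟩
      have hlt : x.2 + x.1 * p ^ r < (x.1 + 1) * p ^ r := by
        rw [add_mul, one_mul, add_comm (x.1 * p ^ r)]
        exact Nat.add_lt_add_right hx2 _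
      have hle : (x.1 + 1) * p ^ r ≤ p * p ^ r :=
        Nat.mul_le_mul_right _ (Nat.succ_le_of_lt hx1)
      calc x.2 + x.1 * p ^ r < (x.1 + 1) * p ^ r := hlt
      _ ≤ p * p ^ r := hle
      _ = p ^ (r + 1) := by rw [pow_succ, mul_comm]
    · intro a _
      exact Nat.mod_add_div' a (p ^ r)
    · intro x hx
      simp only [Finset.mem_filter, Finset.mem_range, Finset.mem_product] at hx
      obtain ⟨⟨hx1, hx2⟩, -⟩ := hx
      have hdiv : (x.2 + x.1 * p ^ r) / p ^ r = x.1 := by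
        rw [Nat.add_mul_div_right _ _ hprpos, Nat.div_eq_of_lt hx2, zero_add]
      have hmod : (x.2 + x.1 * p ^ r) % p ^ r = x.2 := by
        rw [Nat.add_mul_mod_self_right, Nat.mod_eq_of_lt hx2]
      exact Prod.ext hdiv hmod
    · intro a _
      conv_lhs => rw [← Nat.mod_add_div' a (p ^ r)]
      rw [pow_add, mul_comm (a / p ^ r) (p ^ r), pow_mul, h1, one_pow, mul_one]
  rw [hstep1, Finset.sum_filter, Finset.sum_product, Finset.sum_comm]
  have hinner : ∀ v ∈ Finset.range (p ^ r),
      (∑ k ∈ Finset.range p, if Nat.Coprime (v + k * p ^ r) p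
          ∧ levelQuotient p r (v + k * p ^ r) = l then θ ^ v else 0)
      = if Nat.Coprime v p then θ ^ v else 0 := by
    intro v _
    by_cases hv : Nat.Coprime v p
    · rw [if_pos hv]
      obtain ⟨k₀, ⟨hk₀p, hk₀l⟩, huniq⟩ := exists_unique_k hp hodd hr hv hl
      refine (Finset.sum_eq_single_of_mem k₀ (Finset.mem_range.mpr hk₀p) ?_).trans ?_
      · intro k hk hne
        rw [if_neg]
        rintro ⟨-, hlq⟩
        exact hne (huniq k ⟨Finset.mem_range.mp hk, hlq⟩)
      · rw [if_pos ⟨(hcoiff v k₀).mpr hv, hk₀l⟩]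
    · rw [if_neg hv]
      refine Finset.sum_eq_zero fun k _ => ?_
      rw [if_neg]
      rintro ⟨hc, -⟩
      exact hv ((hcoiff v k).mp hc)
  rw [Finset.sum_congr rfl hinner, ← Finset.sum_filter]
  have hsplit := Finset.sum_filter_add_sum_filter_not (Finset.range (p ^ r))
    (fun v => Nat.Coprime v p) (fun v => θ ^ v)
  have hnc : ∑ v ∈ (Finset.range (p ^ r)).filter (fun v => ¬Nat.Coprime v p), θ ^ v
      = ∑ w ∈ Finset.range (p ^ (r - 1)), (θ ^ p) ^ w := by
    refine Finset.sum_nbij' (fun v => v / p) (fun w => p * w) ?_ ?_ ?_ ?_ ?_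
    · intro a ha
      simp only [Finset.mem_filter, Finset.mem_range] at ha ⊢
      rw [Nat.div_lt_iff_lt_mul hp.pos, hpr1]
      exact ha.1
    · intro w hw
      simp only [Finset.mem_filter, Finset.mem_range] at hw ⊢
      constructor
      · calc p * w < p * p ^ (r - 1) := (Nat.mul_lt_mul_left hp.pos).mpr hw
        _ = p ^ r := hppow
      · intro hco
        exact (hp.coprime_iff_not_dvd.mp hco.symm) (dvd_mul_right p w)
    · intro a ha
      simp only [Finset.mem_filter, Finset.mem_range] at ha
      have hdvd : p ∣ a := by
        by_contra hnd
        exact ha.2 ((hp.coprime_iff_not_dvd.mpr hnd).symm)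
      exact Nat.mul_div_cancel' hdvd
    · intro w _
      exact Nat.mul_div_cancel_left _ hp.pos
    · intro a ha
      simp only [Finset.mem_filter, Finset.mem_range] at ha
      have hdvd : p ∣ a := by
        by_contra hnd
        exact ha.2 ((hp.coprime_iff_not_dvd.mpr hnd).symm)
      rw [← pow_mul, Nat.mul_div_cancel' hdvd]
  rw [hgeom, hnc, hgeom2] at hsplit
  simpa using hsplit
end

section
/- Let p be an odd prime and i ≥ 1. The generalized Fermat quotients of order i satisfy F^{(i)}(v + k p^i) ≡ F^{(i)}(v) − k v^{p−2} (mod p) for all v coprime to p and all integers k. -/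
open Classical in
/-- Leeb's Fermat quotient of order `i`: the `i`-th base-`p` digit of `u^{p-1}`,
i.e. `F^{(i)}(u) = (u^{p-1} - 1)/p^i mod p` for `gcd(u,p)=1`, and `0` if `p ∣ u`. -/
noncomputable def fermatQuotientOrder (p i : ℕ) (v : ℤ) : ℤ :=
  if IsCoprime v (p : ℤ) then (v ^ (p - 1) - 1) / (p : ℤ) ^ i % (p : ℤ) else 0

/-- `F^{(i)}(v + k p^i) ≡ F^{(i)}(v) - k v^{p-2} (mod p)`. -/
theorem fermatQuotientOrder_shift (p i : ℕ) (hp : p.Prime) (hodd : Odd p) (hi : 1 ≤ i)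
    (v : ℤ) (hv : IsCoprime v (p : ℤ)) (k : ℤ) :
    fermatQuotientOrder p i (v + k * (p : ℤ) ^ i) ≡
      fermatQuotientOrder p i v - k * v ^ (p - 2) [ZMOD p] := by
  obtain ⟨j, rfl⟩ : ∃ j, i = j + 1 := ⟨i - 1, (Nat.succ_pred_eq_of_pos hi).symm⟩
  set i := j + 1
  have hp0 : (p : ℤ) ≠ 0 := by exact_mod_cast hp.ne_zero
  have hpi : ((p : ℤ) ^ i) ≠ 0 := pow_ne_zero _ hp0
  have hv' : IsCoprime (v + k * (p : ℤ) ^ i) (p : ℤ) := by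
    have : v + k * (p : ℤ) ^ i = v + (p : ℤ) * (k * (p : ℤ) ^ j) := by ring
    rw [this]
    exact hv.add_mul_left_left _
  -- binomial expansion
  obtain ⟨t, ht⟩ := sq_dvd_add_pow_sub_sub (k * (p : ℤ) ^ i) v (p - 1)
  have hcast : ((p - 1 : ℕ) : ℤ) = (p : ℤ) - 1 := by
    have : 1 ≤ p := hp.one_le
    push_cast [this]; ring
  have key : (v + k * (p : ℤ) ^ i) ^ (p - 1) - 1 =
      (v ^ (p - 1) - 1) + (p : ℤ) ^ i *
        ((((p : ℤ) - 1) * v ^ (p - 1 - 1) * k) + (p : ℤ) * ((p : ℤ) ^ j * k ^ 2 * t)) := by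
    have h2 : (k * (p : ℤ) ^ i) ^ 2 = (p : ℤ) ^ i * ((p : ℤ) * ((p : ℤ) ^ j * k ^ 2)) := by
      simp only [i]; ring
    rw [hcast] at ht
    linear_combination ht + t * h2
  unfold fermatQuotientOrder
  rw [if_pos hv', if_pos hv]
  have hdiv : (v + k * (p : ℤ) ^ i) ^ (p - 1) - 1 = (v ^ (p - 1) - 1) +
      ((((p : ℤ) - 1) * v ^ (p - 1 - 1) * k) + (p : ℤ) * ((p : ℤ) ^ j * k ^ 2 * t))
        * (p : ℤ) ^ i := by linarith [key]
  rw [hdiv, Int.add_mul_ediv_right _ _ hpi]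
  have h1 : ∀ a : ℤ, a % (p : ℤ) ≡ a [ZMOD (p : ℕ)] :=
    fun a => Int.emod_emod_of_dvd a dvd_rfl
  calc ((v ^ (p - 1) - 1) / (p : ℤ) ^ i +
          ((((p : ℤ) - 1) * v ^ (p - 1 - 1) * k) +
            (p : ℤ) * ((p : ℤ) ^ j * k ^ 2 * t))) % (p : ℤ)
      ≡ (v ^ (p - 1) - 1) / (p : ℤ) ^ i +
          ((((p : ℤ) - 1) * v ^ (p - 1 - 1) * k) +
            (p : ℤ) * ((p : ℤ) ^ j * k ^ 2 * t)) [ZMOD (p : ℕ)] := h1 _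
    _ ≡ (v ^ (p - 1) - 1) / (p : ℤ) ^ i % (p : ℤ) - k * v ^ (p - 2) [ZMOD (p : ℕ)] := by
        have h2 : (v ^ (p - 1) - 1) / (p : ℤ) ^ i ≡
            (v ^ (p - 1) - 1) / (p : ℤ) ^ i % (p : ℤ) [ZMOD (p : ℕ)] := (h1 _).symm
        have h3 : (((p : ℤ) - 1) * v ^ (p - 1 - 1) * k) +
            (p : ℤ) * ((p : ℤ) ^ j * k ^ 2 * t) ≡ - k * v ^ (p - 2) [ZMOD (p : ℕ)] := by
          have : p - 1 - 1 = p - 2 := by omega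
          rw [this, Int.ModEq]
          conv_lhs => rw [show (((p : ℤ) - 1) * v ^ (p - 2) * k) +
            (p : ℤ) * ((p : ℤ) ^ j * k ^ 2 * t) =
            - k * v ^ (p - 2) + (p : ℤ) * (v ^ (p - 2) * k + (p : ℤ) ^ j * k ^ 2 * t)
            from by ring]
          simp [Int.add_mul_emod_self_left]
        calc _ ≡ (v ^ (p - 1) - 1) / (p : ℤ) ^ i % (p : ℤ) + - k * v ^ (p - 2)
              [ZMOD (p : ℕ)] := h2.add h3
          _ = _ := by ring
end
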